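/- Let $N\geq 2$, $m\geq 3$, and let $(a,b)$ satisfy $N(m-2)/(2m-3) < a < N/2$, $2(m-1)/(N+(2m-3)a) < b \leq 2m/(N+(2m-1)a)$, and $b < 2/N$. Let $g : \mathbb{R} \to \mathbb{R}$ be supported in $[-N/2, N/2]$ (i.e., $g(y) = 0$ whenever $|y| > N/2$). Then for every integer $k$ with $3-m \leq k \leq m-1$, every integer $\ell$ with $3-k \leq \ell \leq m-1$, and every $x \in [-a/2, 0]$, one has $g(x + \frac{k}{b} + \ell a) = 0$. -/

import Mathlib

theorem stmt_6 (N a b : ℝ) (m : ℕ) (hN : 2 ≤ N) (hm : 3 ≤ m)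
    (ha1 : N * (m - 2) / (2 * m - 3) < a) (ha2 : a < N / 2)
    (hb1 : 2 * (m - 1) / (N + (2 * m - 3) * a) < b)
    (hb2 : b ≤ 2 * m / (N + (2 * m - 1) * a))
    (hb3 : b < 2 / N)
    (g : ℝ → ℝ) (hg : ∀ y : ℝ, |y| > N / 2 → g y = 0) :
    ∀ k : ℤ, 3 - (m : ℤ) ≤ k → k ≤ (m : ℤ) - 1 →
      ∀ l : ℤ, 3 - k ≤ l → l ≤ (m : ℤ) - 1 →
        ∀ x ∈ Set.Icc (-(a / 2)) (0 : ℝ),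
          g (x + (k : ℝ) / b + (l : ℝ) * a) = 0 := by
  intro k hk1 hk2 l hl1 hl2 x hx
  obtain ⟨hx1, hx2⟩ := hx
  have hM : (3:ℝ) ≤ (m:ℝ) := by exact_mod_cast hm
  have h0 : (0:ℝ) < 2 * (m:ℝ) - 3 := by linarith
  have ha1' : N * ((m:ℝ) - 2) < a * (2 * m - 3) := by
    rw [div_lt_iff₀ h0] at ha1; linarith
  have ha0 : 0 < a := by nlinarith
  have hden : 0 < N + (2 * (m:ℝ) - 3) * a := by nlinarith
  have hb0 : 0 < b :=
    lt_trans (div_pos (by nlinarith) hden) hb1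
  have h1 : 2 * ((m:ℝ) - 1) < b * (N + (2 * m - 3) * a) := by
    rw [div_lt_iff₀ hden] at hb1; linarith
  have hden2 : 0 < N + (2 * (m:ℝ) - 1) * a := by nlinarith
  have h2 : b * (N + (2 * (m:ℝ) - 1) * a) ≤ 2 * m := by
    rw [le_div_iff₀ hden2] at hb2; linarith
  have hba : b * a < 1 := by
    nlinarith [mul_pos hb0 (show (0:ℝ) < N - a by linarith)]
  have hk : (3:ℝ) - m ≤ (k:ℝ) := by exact_mod_cast hk1
  have hkl : (3:ℝ) ≤ (k:ℝ) + l := by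
    have h : (3:ℤ) ≤ k + l := by omega
    exact_mod_cast h
  have hF2 : 0 < b * (a * (2 * (m:ℝ) - 3) - N * ((m:ℝ) - 2)) :=
    mul_pos hb0 (by linarith)
  have hmain : b * (N / 2) < b * x + (k:ℝ) + b * ((l:ℝ) * a) := by
    nlinarith [mul_nonneg (show (0:ℝ) ≤ (k:ℝ) - (3 - m) by linarith)
        (show (0:ℝ) ≤ 1 - b * a by linarith),
      mul_nonneg (show (0:ℝ) ≤ (k:ℝ) + l - 3 by linarith)
        (le_of_lt (mul_pos hb0 ha0)),
      mul_nonneg hb0.le (show (0:ℝ) ≤ x + a / 2 by linarith),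
      mul_nonneg (show (0:ℝ) ≤ (m:ℝ) - 3 by linarith)
        (show (0:ℝ) ≤ b * (N + (2 * m - 3) * a) - 2 * ((m:ℝ) - 1) by linarith),
      hF2, h1, h2, mul_pos hb0 ha0]
  have heq : b * (x + (k:ℝ) / b + (l:ℝ) * a) = b * x + (k:ℝ) + b * ((l:ℝ) * a) := by
    field_simp
  have key : N / 2 < x + (k:ℝ) / b + (l:ℝ) * a := by
    have := hmain
    rw [← heq] at this
    exact lt_of_mul_lt_mul_left (by linarith [this]) hb0.le
  apply hg
  exact lt_of_lt_of_le key (le_abs_self _)
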